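/- arXiv:1712.09686 — 2 statements merged into one kernel-verified Lean document; each statement's English description precedes it below -/
import Mathlib

section
/- Common knowledge of a deviator event persists along a play: if a coalition C attains common knowledge of D^i(π) at a history τ, then C attains common knowledge of D^i(π) at every prolongation history τ' of τ (every history extending τ). -/
/-!
Infinite games on finite graphs with imperfect monitoring
(Berwanger–Ramanujam, "Deviator Detection under Imperfect Monitoring").

Since the transition function is deterministic and the initial global state
is fixed, a history `v0 a1 v1 ... a_t v_t` is fully determined by its
sequence of action profiles.  We therefore model histories as lists of
action profiles (oldest first) and plays as functions `ℕ → (∀ i, A i)`.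
-/

/-- A game structure: a set `I` of players, actions `A i`, observations `B i`,
global states `St`, a deterministic transition function and a fixed initial
global state. -/
structure GameStr (I : Type) (A : I → Type) (B : I → Type) (St : Type) where
  trans : St → (∀ i, A i) → St × (∀ i, B i)
  init : St

namespace GameStr

variable {I : Type} {A B : I → Type} {St : Type}

/-- The global state reached after a history. -/
def stateAfter (G : GameStr I A B St) (h : List (∀ i, A i)) : St :=
  h.foldl (fun v a => (G.trans v a).1) G.init

/-- Observation sequence of player `i` along a history played from state `v`. -/
def obsSeqFrom (G : GameStr I A B St) (i : I) : St → List (∀ j, A j) → List (B i)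
  | _, [] => []
  | v, a :: h => (G.trans v a).2 i :: obsSeqFrom G i (G.trans v a).1 h

/-- The observation sequence `β^i` of player `i` along a history. -/
def obsSeq (G : GameStr I A B St) (i : I) (h : List (∀ j, A j)) : List (B i) :=
  G.obsSeqFrom i G.init h

/-- Indistinguishability `~^i`: player `i` receives the same observation
sequence along the two histories. -/
def Indist (G : GameStr I A B St) (i : I) (h h' : List (∀ j, A j)) : Prop :=
  G.obsSeq i h = G.obsSeq i h'

/-- The event `E` is common knowledge among coalition `C` at history `h`:
every history reachable from `h` via a finite chain of relations `~^{i_1},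
..., ~^{i_k}` with `i_1, ..., i_k ∈ C` belongs to `E`. -/
def CommonKnow (G : GameStr I A B St) (C : Set I)
    (E : Set (List (∀ j, A j))) (h : List (∀ j, A j)) : Prop :=
  ∀ h', Relation.ReflTransGen (fun x y => ∃ i ∈ C, G.Indist i x y) h h' → h' ∈ E

/-- The history of length `t` produced by the strategy profile `s`. -/
def outHist (G : GameStr I A B St) (s : ∀ i, List (B i) → A i) :
    ℕ → List (∀ i, A i)
  | 0 => []
  | t + 1 => G.outHist s t ++ [fun i => s i (G.obsSeq i (G.outHist s t))]

/-- The outcome play `out(s)` of the strategy profile `s`. -/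
def outPlay (G : GameStr I A B St) (s : ∀ i, List (B i) → A i) (t : ℕ) :
    ∀ i, A i :=
  fun i => s i (G.obsSeq i (G.outHist s t))

/-- Perfect monitoring of the state: all histories in an information set of a
player end at the same global state. -/
def PerfectMonitoring (G : GameStr I A B St) : Prop :=
  ∀ (i : I) (h h' : List (∀ j, A j)),
    G.obsSeq i h = G.obsSeq i h' → G.stateAfter h = G.stateAfter h'

end GameStr

/-- The history consisting of the first `t` rounds of a play. -/
def prefixOf {α : Type*} (p : ℕ → α) (t : ℕ) : List α := (List.range t).map p

/-- A strategy is finite-state if it is computed by an automaton with finitely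
many memory states reading the observation sequence. -/
def FinState {X Y : Type*} (s : List X → Y) : Prop :=
  ∃ (Q : Type) (_ : Fintype Q) (q0 : Q) (δ : Q → X → Q) (o : Q → Y),
    ∀ l, s l = o (l.foldl δ q0)

/-- `DevEvent π i τ` : the history `τ` disagrees with the play `π` and, at the
first round where they disagree, they differ only in the action of player `i`. -/
def DevEvent {I : Type} {A : I → Type} (π : ℕ → ∀ i, A i) (i : I)
    (τ : List (∀ j, A j)) : Prop :=
  ∃ t, ∃ ht : t < τ.length,
    (∀ s (hs : s < t), τ.get ⟨s, hs.trans ht⟩ = π s) ∧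
    τ.get ⟨t, ht⟩ i ≠ π t i ∧
    ∀ j, j ≠ i → τ.get ⟨t, ht⟩ j = π t j

/-- A deviator-detection strategy profile with respect to the set `W` of plays:
the outcome belongs to `W` and, whenever some player `i` unilaterally deviates
so that the outcome disagrees with `out(s)`, the coalition of all other players
attains common knowledge of `D^i(out(s))` at some history of the deviating play. -/
def IsDevDetection {I : Type} [DecidableEq I] {A B : I → Type} {St : Type}
    (G : GameStr I A B St) (W : Set (ℕ → ∀ i, A i))
    (s : ∀ i, List (B i) → A i) : Prop :=
  G.outPlay s ∈ W ∧
  ∀ (i : I) (r : List (B i) → A i),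
    (∃ t, G.outPlay (Function.update s i r) t ≠ G.outPlay s t) →
    ∃ t, G.CommonKnow {j | j ≠ i} {τ | DevEvent (G.outPlay s) i τ}
        (prefixOf (G.outPlay (Function.update s i r)) t)

/-!
### Statement 7
Common knowledge of a deviator event persists along a play.
-/

lemma obsSeqFrom_length {I : Type} {A B : I → Type} {St : Type}
    (G : GameStr I A B St) (i : I) (v : St) (h : List (∀ j, A j)) :
    (G.obsSeqFrom i v h).length = h.length := by
  induction h generalizing v with
  | nil => rfl
  | cons a h ih => simp [GameStr.obsSeqFrom, ih]

lemma obsSeqFrom_take {I : Type} {A B : I → Type} {St : Type}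
    (G : GameStr I A B St) (i : I) (v : St) (h : List (∀ j, A j)) (n : ℕ) :
    G.obsSeqFrom i v (h.take n) = (G.obsSeqFrom i v h).take n := by
  induction h generalizing v n with
  | nil => simp [GameStr.obsSeqFrom]
  | cons a h ih =>
    cases n with
    | zero => simp [GameStr.obsSeqFrom]
    | succ n => simp [GameStr.obsSeqFrom, ih]

lemma indist_length {I : Type} {A B : I → Type} {St : Type}
    (G : GameStr I A B St) (i : I) {h h' : List (∀ j, A j)}
    (hi : G.Indist i h h') : h.length = h'.length := by
  have := congrArg List.length hi
  simpa [GameStr.obsSeq, obsSeqFrom_length] using this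

lemma indist_take {I : Type} {A B : I → Type} {St : Type}
    (G : GameStr I A B St) (i : I) {h h' : List (∀ j, A j)}
    (hi : G.Indist i h h') (n : ℕ) : G.Indist i (h.take n) (h'.take n) := by
  unfold GameStr.Indist GameStr.obsSeq at *
  rw [obsSeqFrom_take, obsSeqFrom_take, hi]

lemma devEvent_mono {I : Type} {A : I → Type} (π : ℕ → ∀ i, A i) (i : I)
    {σ σ' : List (∀ j, A j)} (hp : σ <+: σ') (hd : DevEvent π i σ) :
    DevEvent π i σ' := by
  obtain ⟨t, ht, h1, h2, h3⟩ := hd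
  have hlen : σ.length ≤ σ'.length := hp.length_le
  refine ⟨t, ht.trans_le hlen, ?_, ?_, ?_⟩
  · intro s hs
    have := h1 s hs
    simpa [List.get_eq_getElem, hp.getElem (hs.trans ht)] using this
  · simpa [List.get_eq_getElem, hp.getElem ht] using h2
  · intro j hj
    simpa [List.get_eq_getElem, hp.getElem ht] using h3 j hj

/-- **Persistence of common knowledge of deviator events.**  If a coalition
`C` attains common knowledge of `D^i(π)` at a history `τ`, then `C` attains
common knowledge of `D^i(π)` at every prolongation history `τ'` of `τ`. -/
theorem commonKnow_devEvent_persists {I : Type} {A B : I → Type} {St : Type}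
    (G : GameStr I A B St) (C : Set I) (π : ℕ → ∀ i, A i) (i : I)
    (τ τ' : List (∀ j, A j)) (hpre : τ <+: τ')
    (hck : G.CommonKnow C {σ | DevEvent π i σ} τ) :
    G.CommonKnow C {σ | DevEvent π i σ} τ' := by
  intro h' hchain
  have key : ∀ h', Relation.ReflTransGen (fun x y => ∃ i ∈ C, G.Indist i x y) τ' h' →
      τ.length ≤ h'.length ∧
      Relation.ReflTransGen (fun x y => ∃ i ∈ C, G.Indist i x y) τ (h'.take τ.length) := by
    intro h' hc
    induction hc with
    | refl =>
      refine ⟨hpre.length_le, ?_⟩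
      have ht : τ'.take τ.length = τ := (List.prefix_iff_eq_take.mp hpre).symm
      rw [ht]
    | tail hab hbc ih =>
      obtain ⟨hlen, hrt⟩ := ih
      obtain ⟨j, hjC, hj⟩ := hbc
      refine ⟨hlen.trans (indist_length G j hj).le, ?_⟩
      exact hrt.tail ⟨j, hjC, indist_take G j hj τ.length⟩
  obtain ⟨hlen, hrt⟩ := key h' hchain
  have hmem : DevEvent π i (h'.take τ.length) := hck _ hrt
  exact devEvent_mono π i (List.take_prefix _ _) hmem
end

section
/- In the four-player reduction game γ' constructed from a three-player coordination game γ, every deviator-detection strategy profile s with respect to the singleton set W consisting of the initial looping play has the property that the pair (s^1, s^2), interpreted in γ, is a distributed winning coordination strategy for the coalition {1, 2} against player 0 with respect to the reachability set F. -/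
/-!
### The four-player reduction game

A three-player coordination game `γ` with players `0, 1, 2` is given by its
transition function `tr`, initial state `v0` and target set `F`; player `0`
is the adversary and the coalition `{1, 2}` seeks to reach `F`.  Strategies
map observation lists to actions; a pair `(s1, s2)` is a distributed winning
coordination strategy if the outcome reaches `F` against every strategy of
player `0`.

The reduction game `γ'` has four players `1, 2, X, Y`, where `X` and `Y` both
take the role of player `0`.  It starts in a fresh state at which it loops
under the fixed action profile `(a1s, a2s, stay, stay)`; the actions of `1`
and `2` at the fresh state are perfectly observable to all players, and the
deviations of `X` and `Y` generate the same fresh observation (the flag `dev`)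
and lead to the initial state of the respective copy `γ_X` or `γ_Y` of `γ`.
The copies evolve identically, except that upon reaching a state in `F` the
observation `sigX`, respectively `sigY`, is sent to all players.
-/

section ThreePlayerGame

variable {A0 A1 A2 B0 B1 B2 St : Type}

/-- Observation sequence of one of the three players (selected by the
projection `pr`) along a history of the three-player game `γ`. -/
def obs3From (tr : St → A0 × A1 × A2 → St × (B0 × B1 × B2)) {β : Type}
    (pr : B0 × B1 × B2 → β) : St → List (A0 × A1 × A2) → List β
  | _, [] => []
  | v, a :: h => pr (tr v a).2 :: obs3From tr pr (tr v a).1 h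

/-- The state of `γ` reached after a history. -/
def st3 (tr : St → A0 × A1 × A2 → St × (B0 × B1 × B2)) (v0 : St)
    (h : List (A0 × A1 × A2)) : St :=
  h.foldl (fun v a => (tr v a).1) v0

/-- The history of length `t` produced in `γ` by the strategies
`(r0, s1, s2)`. -/
def hist3 (tr : St → A0 × A1 × A2 → St × (B0 × B1 × B2)) (v0 : St)
    (r0 : List B0 → A0) (s1 : List B1 → A1) (s2 : List B2 → A2) :
    ℕ → List (A0 × A1 × A2)
  | 0 => []
  | t + 1 =>
      let h := hist3 tr v0 r0 s1 s2 t
      h ++ [(r0 (obs3From tr Prod.fst v0 h),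
             s1 (obs3From tr (fun b => b.2.1) v0 h),
             s2 (obs3From tr (fun b => b.2.2) v0 h))]

/-- `(s1, s2)` is a distributed winning coordination strategy for the
coalition `{1, 2}` in `γ`: against every strategy of player `0`, the outcome
play reaches the target set `F`. -/
def IsDistWinning (tr : St → A0 × A1 × A2 → St × (B0 × B1 × B2)) (v0 : St)
    (F : St → Bool) (s1 : List B1 → A1) (s2 : List B2 → A2) : Prop :=
  ∀ r0 : List B0 → A0, ∃ t, F (st3 tr v0 (hist3 tr v0 r0 s1 s2 t)) = true

end ThreePlayerGame

/-- The four players of the reduction game `γ'`. -/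
inductive P | pl1 | pl2 | plX | plY
  deriving DecidableEq

/-- Observations in `γ'`: at the fresh state everybody observes the actions of
players `1` and `2` together with the flag telling whether `X` or `Y` deviated;
inside the copies, players observe their original observations, and the
signals `sigX` / `sigY` are broadcast when the target set is reached in the
respective copy. -/
inductive Obs (A1 A2 B0 B1 B2 : Type)
  | start (a1 : A1) (a2 : A2) (dev : Bool)
  | ob0 (b : B0)
  | ob1 (b : B1)
  | ob2 (b : B2)
  | sigX
  | sigY

/-- Global states of `γ'`: the fresh looping state, or a state of the copy
`γ_X` or of the copy `γ_Y`. -/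
inductive GSt (St : Type) | fresh | inX (v : St) | inY (v : St)

/-- Actions in `γ'`: players `1`, `2` keep their actions; `X` and `Y` may stay
(`none`, the loop action) or play an action of player `0` (`some a`). -/
def PAct (A0 A1 A2 : Type) : P → Type
  | .pl1 => A1
  | .pl2 => A2
  | .plX => Option A0
  | .plY => Option A0

section Reduction

variable {A0 A1 A2 B0 B1 B2 St : Type} [Inhabited A0]

/-- The transition function of the reduction game `γ'`. -/
def transRed (tr : St → A0 × A1 × A2 → St × (B0 × B1 × B2)) (v0 : St)
    (F : St → Bool) :
    GSt St → (∀ p, PAct A0 A1 A2 p) → GSt St × (∀ _ : P, Obs A1 A2 B0 B1 B2)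
  | .fresh, a =>
      let d : Bool := (a .plX).isSome || (a .plY).isSome
      let v' : GSt St :=
        match a .plX, a .plY with
        | some _, none => .inX v0
        | none, some _ => .inY v0
        | _, _ => .fresh
      (v', fun _ => .start (a .pl1) (a .pl2) d)
  | .inX v, a =>
      let q := tr v ((a .plX).getD default, a .pl1, a .pl2)
      (.inX q.1,
        if F q.1 then fun _ => .sigX
        else fun p => match p with
          | .pl1 => .ob1 q.2.2.1
          | .pl2 => .ob2 q.2.2.2
          | _ => .ob0 q.2.1)
  | .inY v, a =>
      let q := tr v ((a .plY).getD default, a .pl1, a .pl2)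
      (.inY q.1,
        if F q.1 then fun _ => .sigY
        else fun p => match p with
          | .pl1 => .ob1 q.2.2.1
          | .pl2 => .ob2 q.2.2.2
          | _ => .ob0 q.2.1)

/-- The reduction game `γ'`. -/
def redGame (tr : St → A0 × A1 × A2 → St × (B0 × B1 × B2)) (v0 : St)
    (F : St → Bool) :
    GameStr P (PAct A0 A1 A2) (fun _ => Obs A1 A2 B0 B1 B2) (GSt St) :=
  ⟨transRed tr v0 F, .fresh⟩

/-- The fixed action profile under which `γ'` loops at the fresh state. -/
def loopProf (a1s : A1) (a2s : A2) : ∀ p, PAct A0 A1 A2 p :=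
  fun p => match p with
  | .pl1 => a1s
  | .pl2 => a2s
  | .plX => none
  | .plY => none

/-- The designated target set `W` of `γ'`: the singleton consisting of the
initial looping play. -/
def WRed (a1s : A1) (a2s : A2) : Set (ℕ → ∀ p, PAct A0 A1 A2 p) :=
  {π | π = fun _ => loopProf a1s a2s}

end Reduction

section Stmt9

variable {A0 A1 A2 B0 B1 B2 St : Type} [Inhabited A0]

/-- Player `1`'s strategy in `γ'`, interpreted in `γ` (via the deviation of
`X` at the first round, which is observed as `start a1s a2s true` and leads to
the copy `γ_X`, in which the observations of player `1` are its
`γ`-observations). -/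
def interp1 (a1s : A1) (a2s : A2)
    (s : ∀ p, List (Obs A1 A2 B0 B1 B2) → PAct A0 A1 A2 p) :
    List B1 → A1 :=
  fun l => s .pl1 (.start a1s a2s true :: l.map Obs.ob1)

/-- Player `2`'s strategy in `γ'`, interpreted in `γ`. -/
def interp2 (a1s : A1) (a2s : A2)
    (s : ∀ p, List (Obs A1 A2 B0 B1 B2) → PAct A0 A1 A2 p) :
    List B2 → A2 :=
  fun l => s .pl2 (.start a1s a2s true :: l.map Obs.ob2)

/-- Projection of a `γ'` action profile to a `γ` action profile, with `X`
interpreted as player `0`. -/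
def projX (a : ∀ p, PAct A0 A1 A2 p) : A0 × A1 × A2 :=
  ((a .plX).getD default, a .pl1, a .pl2)

/-- Embedding of a `γ` profile in `γ'` with `Y` playing the role of `0`. -/
def embY (c : A0 × A1 × A2) : ∀ p, PAct A0 A1 A2 p :=
  fun p => match p with
  | .pl1 => c.2.1
  | .pl2 => c.2.2
  | .plX => none
  | .plY => some c.1

/-- First action profile of the `X`-deviating play. -/
def devP0 (a1s : A1) (a2s : A2) (x : A0) : ∀ p, PAct A0 A1 A2 p :=
  fun p => match p with
  | .pl1 => a1s
  | .pl2 => a2s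
  | .plX => some x
  | .plY => none

/-- First action profile of the mirror `Y`-deviating history. -/
def devQ0 (a1s : A1) (a2s : A2) (x : A0) : ∀ p, PAct A0 A1 A2 p :=
  fun p => match p with
  | .pl1 => a1s
  | .pl2 => a2s
  | .plX => none
  | .plY => some x

/-- `F` is `false` at every state reached along the history `h` from `v`. -/
def okF (tr : St → A0 × A1 × A2 → St × (B0 × B1 × B2)) (F : St → Bool) :
    St → List (A0 × A1 × A2) → Prop
  | _, [] => True
  | v, a :: h => F (tr v a).1 = false ∧ okF tr F (tr v a).1 h

/-- Extraction of the `γ`-observations of player `0` from a `γ'`-observation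
sequence. -/
def extract0 : List (Obs A1 A2 B0 B1 B2) → List B0 :=
  List.filterMap fun o => match o with | Obs.ob0 b => some b | _ => none

theorem extract0_map_ob0 (l : List B0) :
    extract0 (A1 := A1) (A2 := A2) (B1 := B1) (B2 := B2) (l.map Obs.ob0) = l := by
  induction l with
  | nil => rfl
  | cons b l ih => simpa [extract0] using ih

theorem filterMap_comp_ob0 (l : List B0) :
    List.filterMap
      (((fun o => match o with | Obs.ob0 b => some b | _ => none) :
          Obs A1 A2 B0 B1 B2 → Option B0) ∘ Obs.ob0) l = l := by
  induction l with
  | nil => rfl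
  | cons b l ih => simpa using ih

theorem okF_snoc (tr : St → A0 × A1 × A2 → St × (B0 × B1 × B2)) (F : St → Bool) :
    ∀ (h : List (A0 × A1 × A2)) (v : St) (a : A0 × A1 × A2),
      okF tr F v h →
      F (tr (List.foldl (fun u b => (tr u b).1) v h) a).1 = false →
      okF tr F v (h ++ [a])
  | [], _, _, _, hF => ⟨hF, trivial⟩
  | _ :: h, v, a, hok, hF => ⟨hok.1, okF_snoc tr F h _ a hok.2 hF⟩

section DetectProof

variable (tr : St → A0 × A1 × A2 → St × (B0 × B1 × B2)) (v0 : St) (F : St → Bool)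

theorem obsX1 : ∀ (h : List (∀ p, PAct A0 A1 A2 p)) (v : St),
    okF tr F v (h.map projX) →
    (redGame tr v0 F).obsSeqFrom .pl1 (.inX v) h
      = (obs3From tr (fun b => b.2.1) v (h.map projX)).map Obs.ob1
  | [], _, _ => rfl
  | a :: h, v, hok => by
      obtain ⟨h1, h2⟩ := hok
      simp only [GameStr.obsSeqFrom, redGame, transRed, List.map_cons, obs3From, projX] at *
      rw [if_neg (by simp [h1])]
      exact congrArg₂ List.cons rfl (obsX1 h _ h2)

theorem obsX2 : ∀ (h : List (∀ p, PAct A0 A1 A2 p)) (v : St),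
    okF tr F v (h.map projX) →
    (redGame tr v0 F).obsSeqFrom .pl2 (.inX v) h
      = (obs3From tr (fun b => b.2.2) v (h.map projX)).map Obs.ob2
  | [], _, _ => rfl
  | a :: h, v, hok => by
      obtain ⟨h1, h2⟩ := hok
      simp only [GameStr.obsSeqFrom, redGame, transRed, List.map_cons, obs3From, projX] at *
      rw [if_neg (by simp [h1])]
      exact congrArg₂ List.cons rfl (obsX2 h _ h2)

theorem obsX0 : ∀ (h : List (∀ p, PAct A0 A1 A2 p)) (v : St),
    okF tr F v (h.map projX) →
    (redGame tr v0 F).obsSeqFrom .plX (.inX v) h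
      = (obs3From tr Prod.fst v (h.map projX)).map Obs.ob0
  | [], _, _ => rfl
  | a :: h, v, hok => by
      obtain ⟨h1, h2⟩ := hok
      simp only [GameStr.obsSeqFrom, redGame, transRed, List.map_cons, obs3From, projX] at *
      rw [if_neg (by simp [h1])]
      exact congrArg₂ List.cons rfl (obsX0 h _ h2)

theorem obsY1 : ∀ (h : List (A0 × A1 × A2)) (v : St),
    okF tr F v h →
    (redGame tr v0 F).obsSeqFrom .pl1 (.inY v) (h.map embY)
      = (obs3From tr (fun b => b.2.1) v h).map Obs.ob1
  | [], _, _ => rfl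
  | a :: h, v, hok => by
      obtain ⟨h1, h2⟩ := hok
      simp only [GameStr.obsSeqFrom, redGame, transRed, List.map_cons, obs3From, embY] at *
      split_ifs with hc
      · exact absurd hc (by simp [h1])
      exact congrArg₂ List.cons (by simp [h1]) (obsY1 h _ h2)

theorem okF_hist (r0 : List B0 → A0) (s1 : List B1 → A1) (s2 : List B2 → A2)
    (hF : ∀ t, F (st3 tr v0 (hist3 tr v0 r0 s1 s2 t)) = false) :
    ∀ n, okF tr F v0 (hist3 tr v0 r0 s1 s2 n)
  | 0 => trivial
  | n + 1 => by
      have ih := okF_hist r0 s1 s2 hF n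
      have hF' := hF (n + 1)
      simp only [hist3, st3, List.foldl_append] at hF' ⊢
      exact okF_snoc tr F _ _ _ ih (by simpa [st3] using hF')

/-- The main correspondence: the `γ'`-history produced when `X` deviates
(playing `r0` through the copy `γ_X`) projects exactly onto the `γ`-history
of `(r0, s¹, s²)`, as long as `F` has not been reached. -/
theorem mainHist (a1s : A1) (a2s : A2)
    (s : ∀ p, List (Obs A1 A2 B0 B1 B2) → PAct A0 A1 A2 p)
    (r0 : List B0 → A0)
    (hp1 : s .pl1 [] = a1s) (hp2 : s .pl2 [] = a2s) (hpY : s .plY [] = none)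
    (hok : ∀ n, okF tr F v0
      (hist3 tr v0 r0 (interp1 a1s a2s s) (interp2 a1s a2s s) n)) :
    ∀ n, ∃ T : List (∀ p, PAct A0 A1 A2 p),
      (redGame tr v0 F).outHist
          (Function.update s .plX (fun l => some (r0 (extract0 l)))) (n + 1)
        = devP0 a1s a2s (r0 []) :: T
      ∧ T.map projX
        = hist3 tr v0 r0 (interp1 a1s a2s s) (interp2 a1s a2s s) n := by
  set rX : List (Obs A1 A2 B0 B1 B2) → Option A0 :=
    fun l => some (r0 (extract0 l)) with hrX
  intro n
  induction n with
  | zero =>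
      refine ⟨[], ?_, rfl⟩
      simp only [GameStr.outHist, List.nil_append]
      congr 1
      funext p
      cases p with
      | pl1 => simpa [Function.update_of_ne (β := fun p => List (Obs A1 A2 B0 B1 B2) → PAct A0 A1 A2 p) (v := rX) (show P.pl1 ≠ P.plX by decide),
          GameStr.obsSeq, GameStr.obsSeqFrom, devP0] using hp1
      | pl2 => simpa [Function.update_of_ne (β := fun p => List (Obs A1 A2 B0 B1 B2) → PAct A0 A1 A2 p) (v := rX) (show P.pl2 ≠ P.plX by decide),
          GameStr.obsSeq, GameStr.obsSeqFrom, devP0] using hp2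
      | plX => simp [Function.update_self, GameStr.obsSeq, GameStr.obsSeqFrom,
          devP0, hrX, extract0]; rfl
      | plY => simpa [Function.update_of_ne (β := fun p => List (Obs A1 A2 B0 B1 B2) → PAct A0 A1 A2 p) (v := rX) (show P.plY ≠ P.plX by decide),
          GameStr.obsSeq, GameStr.obsSeqFrom, devP0] using hpY
  | succ n ih =>
      obtain ⟨T, hT, hTp⟩ := ih
      have hokn : okF tr F v0 (T.map projX) := by rw [hTp]; exact hok n
      have htrans : (redGame tr v0 F).trans GSt.fresh (devP0 a1s a2s (r0 [])) =
          (GSt.inX v0, fun _ => Obs.start a1s a2s true) := rfl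
      have e1 : (redGame tr v0 F).obsSeq .pl1 (devP0 a1s a2s (r0 []) :: T)
          = Obs.start a1s a2s true ::
            ((obs3From tr (fun b => b.2.1) v0 (T.map projX)).map Obs.ob1) := by
        simp only [GameStr.obsSeq, GameStr.obsSeqFrom, redGame] at htrans ⊢
        rw [htrans]
        exact congrArg₂ List.cons rfl (obsX1 tr v0 F T v0 hokn)
      have e2 : (redGame tr v0 F).obsSeq .pl2 (devP0 a1s a2s (r0 []) :: T)
          = Obs.start a1s a2s true ::
            ((obs3From tr (fun b => b.2.2) v0 (T.map projX)).map Obs.ob2) := by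
        simp only [GameStr.obsSeq, GameStr.obsSeqFrom, redGame] at htrans ⊢
        rw [htrans]
        exact congrArg₂ List.cons rfl (obsX2 tr v0 F T v0 hokn)
      have e0 : (redGame tr v0 F).obsSeq .plX (devP0 a1s a2s (r0 []) :: T)
          = Obs.start a1s a2s true ::
            ((obs3From tr Prod.fst v0 (T.map projX)).map Obs.ob0) := by
        simp only [GameStr.obsSeq, GameStr.obsSeqFrom, redGame] at htrans ⊢
        rw [htrans]
        exact congrArg₂ List.cons rfl (obsX0 tr v0 F T v0 hokn)
      refine ⟨T ++ [fun p => Function.update s .plX rX p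
        ((redGame tr v0 F).obsSeq p (devP0 a1s a2s (r0 []) :: T))], ?_, ?_⟩
      · rw [GameStr.outHist, hT]
        rfl
      · have hq1 : Function.update s P.plX rX P.pl1
            ((redGame tr v0 F).obsSeq P.pl1 (devP0 a1s a2s (r0 []) :: T))
            = interp1 a1s a2s s (obs3From tr (fun b => b.2.1) v0 (T.map projX)) := by
          erw [Function.update_of_ne (show P.pl1 ≠ P.plX by decide), e1]; rfl
        have hq2 : Function.update s P.plX rX P.pl2
            ((redGame tr v0 F).obsSeq P.pl2 (devP0 a1s a2s (r0 []) :: T))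
            = interp2 a1s a2s s (obs3From tr (fun b => b.2.2) v0 (T.map projX)) := by
          erw [Function.update_of_ne (show P.pl2 ≠ P.plX by decide), e2]; rfl
        have hq0 : Function.update s P.plX rX P.plX
            ((redGame tr v0 F).obsSeq P.plX (devP0 a1s a2s (r0 []) :: T))
            = some (r0 (obs3From tr Prod.fst v0 (T.map projX))) := by
          erw [Function.update_self, hrX, e0]
          simp [extract0, filterMap_comp_ob0]
          rfl
        simp only [List.map_append, List.map_cons, List.map_nil, hTp, hist3]
        congr 1
        simp only [projX, hq1, hq2, hq0, ← hTp, Option.getD_some]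

end DetectProof

/-- **From deviator detection in `γ'` to distributed coordination in `γ`.**
Every deviator-detection strategy profile `s` in the reduction game `γ'` with
respect to the singleton target set `W` consisting of the initial looping play
yields, via the interpretation of `(s^1, s^2)` in `γ`, a distributed winning
coordination strategy for the coalition `{1, 2}` against player `0` with
respect to the reachability set `F`. -/
theorem detection_in_reduction_gives_coordination
    (tr : St → A0 × A1 × A2 → St × (B0 × B1 × B2)) (v0 : St) (F : St → Bool)
    (a1s : A1) (a2s : A2)
    (s : ∀ p, List (Obs A1 A2 B0 B1 B2) → PAct A0 A1 A2 p)
    (hs : IsDevDetection (redGame tr v0 F) (WRed a1s a2s) s) :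
    IsDistWinning tr v0 F (interp1 a1s a2s s) (interp2 a1s a2s s) := by
  obtain ⟨hW, hdet⟩ := hs
  have hloop : (redGame tr v0 F).outPlay s = fun _ => loopProf a1s a2s := hW
  have hp1 : s .pl1 [] = a1s := by
    have := congrFun (congrFun hloop 0) P.pl1
    simpa [GameStr.outPlay, GameStr.outHist, GameStr.obsSeq, GameStr.obsSeqFrom,
      loopProf] using this
  have hp2 : s .pl2 [] = a2s := by
    have := congrFun (congrFun hloop 0) P.pl2
    simpa [GameStr.outPlay, GameStr.outHist, GameStr.obsSeq, GameStr.obsSeqFrom,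
      loopProf] using this
  have hpY : s .plY [] = none := by
    have := congrFun (congrFun hloop 0) P.plY
    simpa [GameStr.outPlay, GameStr.outHist, GameStr.obsSeq, GameStr.obsSeqFrom,
      loopProf] using this
  intro r0
  by_contra hno
  push_neg at hno
  have hF : ∀ t, F (st3 tr v0
      (hist3 tr v0 r0 (interp1 a1s a2s s) (interp2 a1s a2s s) t)) = false := by
    intro t
    have := hno t
    simpa using this
  set rX : List (Obs A1 A2 B0 B1 B2) → Option A0 :=
    fun l => some (r0 (extract0 l)) with hrX
  have hdiff : ∃ t, (redGame tr v0 F).outPlay (Function.update s .plX rX) t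
      ≠ (redGame tr v0 F).outPlay s t := by
    refine ⟨0, fun hcon => ?_⟩
    have h1 : (redGame tr v0 F).outPlay (Function.update s .plX rX) 0 P.plX
        = some (r0 []) := by
      simp [GameStr.outPlay, GameStr.outHist, GameStr.obsSeq, GameStr.obsSeqFrom,
        Function.update_self, hrX, extract0]; rfl
    have h2 : (redGame tr v0 F).outPlay s 0 P.plX = none := by
      rw [hloop]; rfl
    have := congrFun hcon P.plX
    rw [h1, h2] at this
    exact Option.some_ne_none _ this
  obtain ⟨t, hCK⟩ := hdet P.plX rX hdiff
  have hpre : ∀ u, prefixOf ((redGame tr v0 F).outPlay (Function.update s .plX rX)) u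
      = (redGame tr v0 F).outHist (Function.update s .plX rX) u := by
    intro u
    induction u with
    | zero => rfl
    | succ u ih =>
        simp only [prefixOf] at ih ⊢
        rw [List.range_succ, List.map_append, ih, GameStr.outHist]
        rfl
  rw [hpre] at hCK
  have hokh : ∀ n, okF tr F v0
      (hist3 tr v0 r0 (interp1 a1s a2s s) (interp2 a1s a2s s) n) :=
    okF_hist tr v0 F r0 _ _ hF
  match t, hCK with
  | 0, hCK =>
      have hD := hCK [] Relation.ReflTransGen.refl
      obtain ⟨t', ht', -, -, -⟩ := hD
      simp at ht'
  | n + 1, hCK =>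
      obtain ⟨T, hT, hTp⟩ := mainHist tr v0 F a1s a2s s r0 hp1 hp2 hpY hokh n
      have hokn : okF tr F v0 (List.map projX T) := by rw [hTp]; exact hokh n
      have htransX : (redGame tr v0 F).trans GSt.fresh (devP0 a1s a2s (r0 [])) =
          (GSt.inX v0, fun _ => Obs.start a1s a2s true) := rfl
      have htransY : (redGame tr v0 F).trans GSt.fresh (devQ0 a1s a2s (r0 [])) =
          (GSt.inY v0, fun _ => Obs.start a1s a2s true) := rfl
      set M : List (∀ p, PAct A0 A1 A2 p) :=
        devQ0 a1s a2s (r0 []) ::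
          (hist3 tr v0 r0 (interp1 a1s a2s s) (interp2 a1s a2s s) n).map embY
        with hM
      have hind : (redGame tr v0 F).Indist P.pl1
          ((redGame tr v0 F).outHist (Function.update s .plX rX) (n + 1)) M := by
        rw [hT]
        show (redGame tr v0 F).obsSeq P.pl1 _ = (redGame tr v0 F).obsSeq P.pl1 M
        have eL : (redGame tr v0 F).obsSeq P.pl1 (devP0 a1s a2s (r0 []) :: T)
            = Obs.start a1s a2s true ::
              ((obs3From tr (fun b => b.2.1) v0 (T.map projX)).map Obs.ob1) := by
          simp only [GameStr.obsSeq, GameStr.obsSeqFrom, redGame] at htransX ⊢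
          rw [htransX]
          exact congrArg₂ List.cons rfl (obsX1 tr v0 F T v0 hokn)
        have eR : (redGame tr v0 F).obsSeq P.pl1 M
            = Obs.start a1s a2s true ::
              ((obs3From tr (fun b => b.2.1) v0
                (hist3 tr v0 r0 (interp1 a1s a2s s) (interp2 a1s a2s s) n)).map
                  Obs.ob1) := by
          rw [hM]
          simp only [GameStr.obsSeq, GameStr.obsSeqFrom, redGame] at htransY ⊢
          rw [htransY]
          exact congrArg₂ List.cons rfl (obsY1 tr v0 F _ v0 (hokh n))
        rw [eL, eR, hTp]
      have hD := hCK M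
        (Relation.ReflTransGen.single ⟨P.pl1, (by decide : P.pl1 ≠ P.plX), hind⟩)
      rw [Set.mem_setOf_eq, hloop] at hD
      obtain ⟨t', ht', hbef, hdiff', -⟩ := hD
      cases t' with
      | zero => exact hdiff' rfl
      | succ k =>
          have h0 := hbef 0 (Nat.succ_pos k)
          have := congrFun h0 P.plY
          exact Option.some_ne_none _ this

end Stmt9
end
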